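/- Let 0 < θ < θ₀, Ψ'(s) = (θ/2)·log((1+s)/(1−s)) − θ₀·s for s ∈ (−1,1), s* = √(1 − θ/θ₀), and let α₀ ∈ (−1,0), β₀ ∈ (0,1) be the unique points with Ψ'(α₀) = Ψ'(s*) and Ψ'(β₀) = Ψ'(−s*). Then for every m ∈ (−1,1) there exist a, b ∈ (−1,1) with a ≤ m ≤ b such that: (i) Ψ'(r) < Ψ'(s) for all r ∈ (−1,m) and all s ∈ (b,1); and (ii) Ψ'(r) < Ψ'(s) for all r ∈ (−1,a) and all s ∈ (m,1). Moreover: if m ≤ α₀ or m ≥ β₀, then the choice a = b = m satisfies (i) and (ii); and if α₀ < m < β₀, then the choice a = α₀, b = β₀ satisfies (i) and (ii). -/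

import Mathlib

open Real Set

namespace Stmt9Aux

noncomputable def f (θ θ₀ s : ℝ) : ℝ :=
  θ / 2 * (Real.log (1 + s) - Real.log (1 - s)) - θ₀ * s

lemma f_hasDeriv (θ θ₀ s : ℝ) (h1 : -1 < s) (h2 : s < 1) :
    HasDerivAt (f θ θ₀) (θ / (1 - s ^ 2) - θ₀) s := by
  have h1' : (0:ℝ) < 1 + s := by linarith
  have h2' : (0:ℝ) < 1 - s := by linarith
  have d1 : HasDerivAt (fun s : ℝ => Real.log (1 + s)) (1 / (1 + s)) s := by
    have h : HasDerivAt (fun s : ℝ => 1 + s) 1 s := by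
      simpa using (hasDerivAt_id s).const_add 1
    simpa [one_div, Function.comp_def] using (Real.hasDerivAt_log h1'.ne').comp s h
  have d2 : HasDerivAt (fun s : ℝ => Real.log (1 - s)) (-(1 / (1 - s))) s := by
    have h : HasDerivAt (fun s : ℝ => 1 - s) (-1) s := by
      simpa using (hasDerivAt_id s).const_sub 1
    have := (Real.hasDerivAt_log h2'.ne').comp s h
    simpa [one_div, Function.comp_def] using this
  have h := ((d1.sub d2).const_mul (θ / 2)).sub ((hasDerivAt_id s).const_mul θ₀)
  have heq : θ / (1 - s ^ 2) - θ₀ = θ / 2 * (1 / (1 + s) - -(1 / (1 - s))) - θ₀ * 1 := by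
    have hs : 1 - s ^ 2 = (1 + s) * (1 - s) := by ring
    rw [hs]
    field_simp
    ring
  rw [heq]
  exact h

lemma f_deriv (θ θ₀ s : ℝ) (h1 : -1 < s) (h2 : s < 1) :
    deriv (f θ θ₀) s = θ / (1 - s ^ 2) - θ₀ :=
  (f_hasDeriv θ θ₀ s h1 h2).deriv

lemma f_contOn (θ θ₀ : ℝ) {D : Set ℝ} (hD : D ⊆ Ioo (-1:ℝ) 1) :
    ContinuousOn (f θ θ₀) D := fun x hx =>
  ((f_hasDeriv θ θ₀ x (hD hx).1 (hD hx).2).continuousAt).continuousWithinAt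

lemma f_zero (θ θ₀ : ℝ) : f θ θ₀ 0 = 0 := by simp [f]

lemma f_neg (θ θ₀ s : ℝ) : f θ θ₀ (-s) = - f θ θ₀ s := by
  simp [f]; ring

end Stmt9Aux

open Stmt9Aux in
/-- For any mean `m ∈ (-1,1)` there are thresholds `a ≤ m ≤ b` making the comparison
properties (i) and (ii) for `Ψ'` hold; moreover `a = b = m` works when `m ≤ α₀` or
`m ≥ β₀`, and `a = α₀`, `b = β₀` works when `α₀ < m < β₀`. -/
theorem stmt9 (θ θ₀ : ℝ) (hθ : 0 < θ) (hθθ₀ : θ < θ₀)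
    (Ψ' : ℝ → ℝ)
    (hΨ' : ∀ s, Ψ' s = θ / 2 * Real.log ((1 + s) / (1 - s)) - θ₀ * s)
    (sstar : ℝ) (hsstar : sstar = Real.sqrt (1 - θ / θ₀))
    (α₀ β₀ : ℝ)
    (hα₀ : α₀ ∈ Set.Ioo (-1 : ℝ) 0) (hα₀val : Ψ' α₀ = Ψ' sstar)
    (hβ₀ : β₀ ∈ Set.Ioo (0 : ℝ) 1) (hβ₀val : Ψ' β₀ = Ψ' (-sstar)) :
    ∀ m ∈ Set.Ioo (-1 : ℝ) 1,
      (∃ a b : ℝ, a ∈ Set.Ioo (-1 : ℝ) 1 ∧ b ∈ Set.Ioo (-1 : ℝ) 1 ∧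
        a ≤ m ∧ m ≤ b ∧
        (∀ r ∈ Set.Ioo (-1 : ℝ) m, ∀ s ∈ Set.Ioo b 1, Ψ' r < Ψ' s) ∧
        (∀ r ∈ Set.Ioo (-1 : ℝ) a, ∀ s ∈ Set.Ioo m 1, Ψ' r < Ψ' s)) ∧
      ((m ≤ α₀ ∨ β₀ ≤ m) →
        (∀ r ∈ Set.Ioo (-1 : ℝ) m, ∀ s ∈ Set.Ioo m 1, Ψ' r < Ψ' s)) ∧
      ((α₀ < m ∧ m < β₀) →
        (∀ r ∈ Set.Ioo (-1 : ℝ) m, ∀ s ∈ Set.Ioo β₀ 1, Ψ' r < Ψ' s) ∧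
        (∀ r ∈ Set.Ioo (-1 : ℝ) α₀, ∀ s ∈ Set.Ioo m 1, Ψ' r < Ψ' s)) := by
  have hθ₀ : (0:ℝ) < θ₀ := hθ.trans hθθ₀
  have hratio : (0:ℝ) < θ / θ₀ := by positivity
  have hratio1 : θ / θ₀ < 1 := (div_lt_one hθ₀).2 hθθ₀
  have hspos : 0 < sstar := by
    rw [hsstar]; exact Real.sqrt_pos.2 (by linarith)
  have hs1 : sstar < 1 := by
    rw [hsstar]
    calc Real.sqrt (1 - θ / θ₀) < Real.sqrt 1 :=
          Real.sqrt_lt_sqrt (by linarith) (by linarith)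
      _ = 1 := Real.sqrt_one
  have hsq : sstar ^ 2 = 1 - θ / θ₀ := by
    rw [hsstar, sq, Real.mul_self_sqrt (by linarith)]
  -- Ψ' agrees with f on (-1,1)
  have hfΨ : ∀ x ∈ Ioo (-1:ℝ) 1, Ψ' x = f θ θ₀ x := by
    intro x hx
    rw [hΨ', f, Real.log_div (by linarith [hx.1] : (1:ℝ) + x ≠ 0)
      (by linarith [hx.2] : (1:ℝ) - x ≠ 0)]
  -- strict monotonicity on the three branches
  have SM1 : StrictMonoOn (f θ θ₀) (Ioc (-1:ℝ) (-sstar)) := by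
    apply strictMonoOn_of_deriv_pos (convex_Ioc _ _)
      (f_contOn θ θ₀ (fun x hx => ⟨hx.1, lt_of_le_of_lt hx.2 (by linarith)⟩))
    intro x hx
    rw [interior_Ioc] at hx
    have hx1 : -1 < x := hx.1
    have hx2 : x < 1 := by linarith [hx.2]
    rw [f_deriv θ θ₀ x hx1 hx2]
    have hxx : sstar ^ 2 < x ^ 2 := by nlinarith [hx.2]
    have h01 : 0 < 1 - x ^ 2 := by nlinarith
    rw [sub_pos, lt_div_iff₀ h01]
    have hc : θ / θ₀ * θ₀ = θ := div_mul_cancel₀ θ hθ₀.ne'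
    nlinarith [mul_pos hθ₀ (show (0:ℝ) < θ / θ₀ - (1 - x ^ 2) by linarith)]
  have SM2 : StrictMonoOn (f θ θ₀) (Ico sstar 1) := by
    apply strictMonoOn_of_deriv_pos (convex_Ico _ _)
      (f_contOn θ θ₀ (fun x hx => ⟨by linarith [hx.1], hx.2⟩))
    intro x hx
    rw [interior_Ico] at hx
    have hx1 : -1 < x := by linarith [hx.1]
    have hx2 : x < 1 := hx.2
    rw [f_deriv θ θ₀ x hx1 hx2]
    have hxx : sstar ^ 2 < x ^ 2 := by nlinarith [hx.1]
    have h01 : 0 < 1 - x ^ 2 := by nlinarith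
    rw [sub_pos, lt_div_iff₀ h01]
    have hc : θ / θ₀ * θ₀ = θ := div_mul_cancel₀ θ hθ₀.ne'
    nlinarith [mul_pos hθ₀ (show (0:ℝ) < θ / θ₀ - (1 - x ^ 2) by linarith)]
  have SA : StrictAntiOn (f θ θ₀) (Icc (-sstar) sstar) := by
    apply strictAntiOn_of_deriv_neg (convex_Icc _ _)
      (f_contOn θ θ₀ (fun x hx => ⟨by linarith [hx.1], by linarith [hx.2]⟩))
    intro x hx
    rw [interior_Icc] at hx
    have hx1 : -1 < x := by linarith [hx.1]
    have hx2 : x < 1 := by linarith [hx.2]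
    rw [f_deriv θ θ₀ x hx1 hx2]
    have hxx : x ^ 2 < sstar ^ 2 := by nlinarith [hx.1, hx.2]
    have h01 : 0 < 1 - x ^ 2 := by nlinarith
    rw [sub_neg, div_lt_iff₀ h01]
    have hc : θ / θ₀ * θ₀ = θ := div_mul_cancel₀ θ hθ₀.ne'
    nlinarith [mul_pos hθ₀ (show (0:ℝ) < (1 - x ^ 2) - θ / θ₀ by linarith)]
  set M : ℝ := f θ θ₀ (-sstar) with hM
  have hfsstar : f θ θ₀ sstar = -M := by
    rw [hM, f_neg]; ring
  have hMpos : 0 < M := by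
    have h0 : (0:ℝ) ∈ Icc (-sstar) sstar := ⟨by linarith, by linarith⟩
    have hm : (-sstar) ∈ Icc (-sstar) sstar := ⟨le_refl _, by linarith⟩
    have := SA hm h0 (by linarith)
    rw [f_zero] at this
    exact this
  -- values at α₀ β₀
  have hα₀mem : α₀ ∈ Ioo (-1:ℝ) 1 := ⟨hα₀.1, lt_trans hα₀.2 one_pos⟩
  have hβ₀mem : β₀ ∈ Ioo (-1:ℝ) 1 := ⟨lt_trans (by norm_num) hβ₀.1, hβ₀.2⟩
  have hsmem : sstar ∈ Ioo (-1:ℝ) 1 := ⟨by linarith, hs1⟩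
  have hnsmem : -sstar ∈ Ioo (-1:ℝ) 1 := ⟨by linarith, by linarith⟩
  have hfα : f θ θ₀ α₀ = -M := by
    rw [← hfΨ α₀ hα₀mem, hα₀val, hfΨ sstar hsmem, hfsstar]
  have hfβ : f θ θ₀ β₀ = M := by
    rw [← hfΨ β₀ hβ₀mem, hβ₀val, hfΨ (-sstar) hnsmem]
  -- α₀ < -sstar and sstar < β₀
  have hαlt : α₀ < -sstar := by
    by_contra h
    push_neg at h
    have hmem : α₀ ∈ Icc (-sstar) sstar := ⟨h, by linarith [hα₀.2]⟩
    have hmem' : sstar ∈ Icc (-sstar) sstar := ⟨by linarith, le_refl _⟩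
    have := SA hmem hmem' (by linarith [hα₀.2])
    rw [hfα, hfsstar] at this
    exact lt_irrefl _ this
  have hβgt : sstar < β₀ := by
    by_contra h
    push_neg at h
    have hmem : β₀ ∈ Icc (-sstar) sstar := ⟨by linarith [hβ₀.1], h⟩
    have hmem' : (-sstar) ∈ Icc (-sstar) sstar := ⟨le_refl _, by linarith⟩
    have := SA hmem' hmem (by linarith [hβ₀.1])
    rw [hfβ] at this
    exact lt_irrefl _ this
  -- upper bound: f r ≤ M for r ∈ (-1, β₀]
  have UB : ∀ r : ℝ, -1 < r → r ≤ β₀ → f θ θ₀ r ≤ M := by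
    intro r hr1 hr2
    rcases le_or_gt r (-sstar) with h | h
    · exact SM1.monotoneOn ⟨hr1, h⟩ ⟨by linarith, le_refl _⟩ h
    · rcases le_or_gt r sstar with h' | h'
      · have := SA.antitoneOn (⟨le_refl _, by linarith⟩ : (-sstar) ∈ Icc (-sstar) sstar)
          ⟨h.le, h'⟩ h.le
        exact this
      · have := SM2.monotoneOn ⟨h'.le, by linarith [hβ₀.2]⟩
          ⟨by linarith, hβ₀.2⟩ hr2
        rw [hfβ] at this
        exact this
  -- lower bound: -M ≤ f s for s ∈ [α₀, 1)
  have LB : ∀ s : ℝ, s < 1 → α₀ ≤ s → -M ≤ f θ θ₀ s := by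
    intro s hs1' hs2
    rcases le_or_gt sstar s with h | h
    · have := SM2.monotoneOn ⟨le_refl _, hs1⟩ ⟨h, hs1'⟩ h
      rw [hfsstar] at this
      exact this
    · rcases le_or_gt (-sstar) s with h' | h'
      · have := SA.antitoneOn ⟨h', h.le⟩ (⟨by linarith, le_refl _⟩ : sstar ∈ Icc (-sstar) sstar) h.le
        rw [hfsstar] at this
        exact this
      · have := SM1.monotoneOn ⟨by linarith [hα₀.1], h'.le⟩ ⟨by linarith [hα₀.1], le_refl _⟩ h'.le
        have h2 := SM1.monotoneOn ⟨by linarith [hα₀.1], by linarith⟩ ⟨by linarith [hα₀.1], h'.le⟩ hs2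
        rw [hfα] at h2
        exact h2
  -- core comparison lemmas (in terms of f)
  have Core1 : ∀ m, m ≤ α₀ → ∀ r, -1 < r → r < m → ∀ s, m < s → s < 1 →
      f θ θ₀ r < f θ θ₀ s := by
    intro m hm r hr1 hr2 s hs1' hs2'
    rcases le_or_gt s (-sstar) with h | h
    · exact SM1 ⟨hr1, by linarith⟩ ⟨by linarith, h⟩ (by linarith)
    · have h1 : f θ θ₀ r < -M := by
        rw [← hfα]
        exact SM1 ⟨hr1, by linarith⟩ ⟨hα₀.1, hαlt.le⟩ (by linarith)
      exact lt_of_lt_of_le h1 (LB s hs2' (by linarith))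
  have Core2 : ∀ m, β₀ ≤ m → ∀ r, -1 < r → r < m → ∀ s, m < s → s < 1 →
      f θ θ₀ r < f θ θ₀ s := by
    intro m hm r hr1 hr2 s hs1' hs2'
    rcases le_or_gt sstar r with h | h
    · exact SM2 ⟨h, by linarith⟩ ⟨by linarith, hs2'⟩ (by linarith)
    · have h1 : f θ θ₀ r ≤ M := UB r hr1 (by linarith)
      have h2 : M < f θ θ₀ s := by
        rw [← hfβ]
        exact SM2 ⟨hβgt.le, hβ₀.2⟩ ⟨by linarith, hs2'⟩ (by linarith)
      exact lt_of_le_of_lt h1 h2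
  have Core3 : ∀ m, m ≤ β₀ → ∀ r, -1 < r → r < m → ∀ s, β₀ < s → s < 1 →
      f θ θ₀ r < f θ θ₀ s := by
    intro m hm r hr1 hr2 s hs1' hs2'
    have h1 : f θ θ₀ r ≤ M := UB r hr1 (by linarith)
    have h2 : M < f θ θ₀ s := by
      rw [← hfβ]
      exact SM2 ⟨hβgt.le, hβ₀.2⟩ ⟨by linarith, hs2'⟩ hs1'
    exact lt_of_le_of_lt h1 h2
  have Core4 : ∀ m, α₀ ≤ m → ∀ r, -1 < r → r < α₀ → ∀ s, m < s → s < 1 →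
      f θ θ₀ r < f θ θ₀ s := by
    intro m hm r hr1 hr2 s hs1' hs2'
    have h1 : f θ θ₀ r < -M := by
      rw [← hfα]
      exact SM1 ⟨hr1, by linarith⟩ ⟨hα₀.1, hαlt.le⟩ hr2
    exact lt_of_lt_of_le h1 (LB s hs2' (by linarith))
  -- assemble
  intro m hm
  -- transfer: statement in terms of Ψ'
  have T : ∀ a b : ℝ, -1 < a → a < 1 → -1 < b → b < 1 →
      (∀ r, -1 < r → r < a → ∀ s, b < s → s < 1 → f θ θ₀ r < f θ θ₀ s) →
      (∀ r ∈ Ioo (-1:ℝ) a, ∀ s ∈ Ioo b 1, Ψ' r < Ψ' s) := by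
    intro a b ha ha' hb hb' h r hr s hs
    rw [hfΨ r ⟨hr.1, by linarith [hr.2]⟩, hfΨ s ⟨by linarith [hs.1], hs.2⟩]
    exact h r hr.1 hr.2 s hs.1 hs.2
  refine ⟨?_, ?_, ?_⟩
  · by_cases h : m ≤ α₀ ∨ β₀ ≤ m
    · refine ⟨m, m, hm, hm, le_refl _, le_refl _, ?_, ?_⟩ <;>
      · apply T m m hm.1 hm.2 hm.1 hm.2
        rcases h with h | h
        · exact Core1 m h
        · exact Core2 m h
    · push_neg at h
      refine ⟨α₀, β₀, hα₀mem, hβ₀mem, (h.1).le, (h.2).le, ?_, ?_⟩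
      · exact T m β₀ hm.1 hm.2 hβ₀mem.1 hβ₀.2 (Core3 m h.2.le)
      · exact T α₀ m hα₀.1 hα₀mem.2 hm.1 hm.2 (Core4 m h.1.le)
  · intro h
    apply T m m hm.1 hm.2 hm.1 hm.2
    rcases h with h | h
    · exact Core1 m h
    · exact Core2 m h
  · rintro ⟨h1, h2⟩
    exact ⟨T m β₀ hm.1 hm.2 hβ₀mem.1 hβ₀.2 (Core3 m h2.le), T α₀ m hα₀.1 hα₀mem.2 hm.1 hm.2 (Core4 m h1.le)⟩
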